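/- Let B be a Borel probability measure on [0,1] that is absolutely continuous with respect to Lebesgue measure, with density B̃ ∈ L¹([0,1]), extended by zero to a function on ℝ≥0. Then for all x₁ > 0 and x₂ > 0, the measure K_B[x₁,x₂] is absolutely continuous with respect to Lebesgue measure on ℝ≥0, with density x ↦ (1/(x₁x₂)) ∫₀^∞ B̃((x − x₁ + w)/x₂) · B̃(w/x₁) dw. -/

import Mathlib

open MeasureTheory Filter Topology
open scoped ENNReal

lemma lint_scale {c : ℝ} (hc : 0 < c) {G : ℝ → ℝ≥0∞} (hG : AEMeasurable G volume) :
    (∫⁻ z, G (c * z)) = ENNReal.ofReal c⁻¹ * ∫⁻ u, G u := by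
  have hmap : Measure.map (fun z : ℝ => c * z) volume = ENNReal.ofReal |c⁻¹| • volume :=
    Real.map_volume_mul_left hc.ne'
  have hG' : AEMeasurable G (Measure.map (fun z : ℝ => c * z) volume) := by
    rw [hmap]; exact hG.mono' Measure.smul_absolutelyContinuous
  rw [← lintegral_map' hG' (measurable_const_mul c).aemeasurable, hmap, lintegral_smul_measure,
    abs_of_pos (inv_pos.mpr hc), smul_eq_mul]

lemma qmp_mul {c : ℝ} (hc : c ≠ 0) :
    Measure.QuasiMeasurePreserving (fun z : ℝ => c * z) volume volume :=
  ⟨measurable_const_mul c, by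
    rw [Real.map_volume_mul_left hc]; exact Measure.smul_absolutelyContinuous⟩

lemma qmp_div {c : ℝ} (hc : c ≠ 0) :
    Measure.QuasiMeasurePreserving (fun z : ℝ => z / c) volume volume := by
  simpa [div_eq_inv_mul] using qmp_mul (inv_ne_zero hc)

open Measure in
lemma qmp_sum : Measure.QuasiMeasurePreserving (fun p : ℝ × ℝ => p.1 + p.2)
    ((volume : Measure ℝ).prod volume) volume :=
  quasiMeasurePreserving_fst.comp
    (measurePreserving_add_prod (volume : Measure ℝ) volume).quasiMeasurePreserving

lemma qmp_aux (a : ℝ) {b : ℝ} (hb : b ≠ 0) :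
    Measure.QuasiMeasurePreserving (fun p : ℝ × ℝ => (p.1 + p.2 - a) / b)
      ((volume : Measure ℝ).prod volume) volume := by
  have h := ((qmp_div hb).comp
    ((measurePreserving_sub_right (volume : Measure ℝ) a).quasiMeasurePreserving.comp qmp_sum))
  exact h

/-- The transfer kernel `K_B[x₁,x₂]`: the pushforward of `B ⊗ B` under
`(z₁, z₂) ↦ x₁ (1 - z₁) + x₂ z₂`. -/
noncomputable def transferK (B : Measure ℝ) (x₁ x₂ : ℝ) : Measure ℝ :=
  Measure.map (fun p : ℝ × ℝ => x₁ * (1 - p.1) + x₂ * p.2) (B.prod B)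

/-- If `B` has density `B̃ ∈ L¹([0,1])` with respect to Lebesgue measure (extended by
zero outside `[0,1]`), then for `x₁, x₂ > 0` the measure `K_B[x₁,x₂]` is absolutely
continuous with respect to Lebesgue measure, with density
`x ↦ (1/(x₁ x₂)) ∫₀^∞ B̃((x - x₁ + w)/x₂) B̃(w/x₁) dw`. -/
theorem stmt2 (Bt : ℝ → ℝ) (hBt_int : Integrable Bt)
    (hBt_nonneg : ∀ z, 0 ≤ Bt z) (hBt_supp : ∀ z, z ∉ Set.Icc (0:ℝ) 1 → Bt z = 0)
    (B : Measure ℝ) [IsProbabilityMeasure B]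
    (hB : B = volume.withDensity (fun z => ENNReal.ofReal (Bt z)))
    (x₁ x₂ : ℝ) (hx₁ : 0 < x₁) (hx₂ : 0 < x₂) :
    transferK B x₁ x₂ =
      volume.withDensity (fun x => ENNReal.ofReal
        ((1 / (x₁ * x₂)) * ∫ w in Set.Ioi (0:ℝ), Bt ((x - x₁ + w) / x₂) * Bt (w / x₁))) := by
  set f : ℝ → ℝ≥0∞ := fun z => ENNReal.ofReal (Bt z) with hfdef
  have hf : AEMeasurable f volume :=
    ENNReal.measurable_ofReal.comp_aemeasurable hBt_int.aemeasurable
  have hfne : ∀ z, f z ≠ ∞ := fun z => ENNReal.ofReal_ne_top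
  have hφ : Measurable (fun p : ℝ × ℝ => x₁ * (1 - p.1) + x₂ * p.2) := by fun_prop
  -- the product measure has product density
  have hprod : B.prod B = ((volume : Measure ℝ).prod volume).withDensity
      (fun p => f p.1 * f p.2) := by
    refine Measure.prod_eq fun s t hs ht => ?_
    rw [withDensity_apply _ (hs.prod ht), ← Measure.prod_restrict,
      lintegral_prod_mul hf.restrict hf.restrict, hB, withDensity_apply _ hs,
      withDensity_apply _ ht]
  -- basic a.e.-measurable pieces
  have hfd1 : AEMeasurable (fun w : ℝ => f (w / x₁)) volume :=
    hf.comp_quasiMeasurePreserving (qmp_div hx₁.ne')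
  have hfd2 : AEMeasurable (fun u : ℝ => f (u / x₂)) volume :=
    hf.comp_quasiMeasurePreserving (qmp_div hx₂.ne')
  have hq12 : AEMeasurable (fun p : ℝ × ℝ => f ((p.2 - x₁ + p.1) / x₂))
      ((volume : Measure ℝ).prod volume) := by
    have h1 : AEMeasurable (fun p : ℝ × ℝ => f ((p.1 + p.2 - x₁) / x₂))
        ((volume : Measure ℝ).prod volume) :=
      hf.comp_quasiMeasurePreserving (qmp_aux x₁ hx₂.ne')
    have e : (fun p : ℝ × ℝ => f ((p.2 - x₁ + p.1) / x₂))
        = fun p : ℝ × ℝ => f ((p.1 + p.2 - x₁) / x₂) := by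
      funext p; congr 2; ring
    rw [e]; exact h1
  have hq21 : AEMeasurable (fun p : ℝ × ℝ => f ((p.1 - x₁ + p.2) / x₂))
      ((volume : Measure ℝ).prod volume) := by
    have h1 : AEMeasurable (fun p : ℝ × ℝ => f ((p.1 + p.2 - x₁) / x₂))
        ((volume : Measure ℝ).prod volume) :=
      hf.comp_quasiMeasurePreserving (qmp_aux x₁ hx₂.ne')
    have e : (fun p : ℝ × ℝ => f ((p.1 - x₁ + p.2) / x₂))
        = fun p : ℝ × ℝ => f ((p.1 + p.2 - x₁) / x₂) := by
      funext p; congr 2; ring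
    rw [e]; exact h1
  have hwfst : AEMeasurable (fun p : ℝ × ℝ => f p.1) ((volume : Measure ℝ).prod volume) :=
    hf.comp_quasiMeasurePreserving Measure.quasiMeasurePreserving_fst
  have hwsnd : AEMeasurable (fun p : ℝ × ℝ => f p.2) ((volume : Measure ℝ).prod volume) :=
    hf.comp_quasiMeasurePreserving Measure.quasiMeasurePreserving_snd
  have hwfst1 : AEMeasurable (fun p : ℝ × ℝ => f (p.1 / x₁))
      ((volume : Measure ℝ).prod volume) :=
    hfd1.comp_quasiMeasurePreserving Measure.quasiMeasurePreserving_fst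
  have hwsnd1 : AEMeasurable (fun p : ℝ × ℝ => f (p.2 / x₁))
      ((volume : Measure ℝ).prod volume) :=
    hfd1.comp_quasiMeasurePreserving Measure.quasiMeasurePreserving_snd
  -- inner change of variables
  have key : ∀ (h : ℝ → ℝ≥0∞), Measurable h → ∀ c : ℝ,
      (∫⁻ z, f z * h (c + x₂ * z)) = ENNReal.ofReal x₂⁻¹ * ∫⁻ x, f ((x - c) / x₂) * h x := by
    intro h hh c
    have h1 : (fun z : ℝ => f z * h (c + x₂ * z))
        = fun z : ℝ => (fun u : ℝ => f (u / x₂) * h (c + u)) (x₂ * z) := by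
      funext z; simp only [mul_div_cancel_left₀ _ hx₂.ne']
    have hG : AEMeasurable (fun u : ℝ => f (u / x₂) * h (c + u)) volume :=
      hfd2.mul ((hh.comp (measurable_const_add c)).aemeasurable)
    rw [h1, lint_scale hx₂ hG]
    congr 1
    have h2 : (fun u : ℝ => f (u / x₂) * h (c + u))
        = fun u : ℝ => (fun x : ℝ => f ((x - c) / x₂) * h x) (c + u) := by
      funext u; simp only [add_sub_cancel_left]
    rw [h2, lintegral_add_left_eq_self (fun x : ℝ => f ((x - c) / x₂) * h x) c]
  -- the full density
  set D : ℝ → ℝ≥0∞ := fun x => ∫⁻ w, f ((x - x₁ + w) / x₂) * f (w / x₁) with hDdef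
  set c₀ : ℝ≥0∞ := ENNReal.ofReal x₁⁻¹ * ENNReal.ofReal x₂⁻¹ with hc₀
  have hc₀ne : c₀ ≠ ∞ := ENNReal.mul_ne_top ENNReal.ofReal_ne_top ENNReal.ofReal_ne_top
  have hc₀0 : c₀ ≠ 0 := by
    rw [hc₀]
    exact mul_ne_zero (by simpa using inv_pos.mpr hx₁)
      (by simpa using inv_pos.mpr hx₂)
  -- a.e. measurability of D
  have hF3 : AEMeasurable (fun p : ℝ × ℝ => f ((p.1 - x₁ + p.2) / x₂) * f (p.2 / x₁))
      ((volume : Measure ℝ).prod volume) := hq21.mul hwsnd1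
  obtain ⟨G3, hG3m, hG3e⟩ := hF3
  have hDae : D =ᵐ[volume] fun x => ∫⁻ w, G3 (x, w) := by
    filter_upwards [Measure.ae_ae_of_ae_prod hG3e] with x hx
    exact lintegral_congr_ae hx
  have hDmeas : AEMeasurable D volume :=
    (Measurable.lintegral_prod_right' (ν := (volume : Measure ℝ)) hG3m).aemeasurable.congr hDae.symm
  -- main computation
  have main : transferK B x₁ x₂ = volume.withDensity (fun x => c₀ * D x) := by
    refine Measure.ext fun s hs => ?_
    set h : ℝ → ℝ≥0∞ := s.indicator 1 with hhdef
    have hh : Measurable h := measurable_one.indicator hs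
    have hhne : ∀ x, h x ≠ ∞ := by
      intro x; by_cases hx : x ∈ s <;> simp [hhdef, Set.indicator, hx]
    have e1 : transferK B x₁ x₂ s
        = ∫⁻ p : ℝ × ℝ, (f p.1 * f p.2) * h (x₁ * (1 - p.1) + x₂ * p.2)
            ∂((volume : Measure ℝ).prod volume) := by
      rw [transferK, Measure.map_apply hφ hs, hprod, withDensity_apply _ (hφ hs),
        ← lintegral_indicator (hφ hs)]
      refine lintegral_congr fun p => ?_
      by_cases hp : x₁ * (1 - p.1) + x₂ * p.2 ∈ s
      · simp [hhdef, Set.indicator, hp]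
      · simp [hhdef, Set.indicator, hp]
    have e2 : (∫⁻ p : ℝ × ℝ, (f p.1 * f p.2) * h (x₁ * (1 - p.1) + x₂ * p.2)
            ∂((volume : Measure ℝ).prod volume))
        = ∫⁻ z₁, f z₁ * ∫⁻ z₂, f z₂ * h (x₁ * (1 - z₁) + x₂ * z₂) := by
      have hmeas1 : AEMeasurable
          (fun p : ℝ × ℝ => f p.1 * f p.2 * h (x₁ * (1 - p.1) + x₂ * p.2))
          ((volume : Measure ℝ).prod volume) :=
        (hwfst.mul hwsnd).mul ((hh.comp hφ).aemeasurable)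
      rw [lintegral_prod _ hmeas1]
      refine lintegral_congr fun z₁ => ?_
      rw [← lintegral_const_mul' _ _ (hfne z₁)]
      exact lintegral_congr fun z₂ => by rw [mul_assoc]
    have e3 : (fun z₁ : ℝ => f z₁ * ∫⁻ z₂, f z₂ * h (x₁ * (1 - z₁) + x₂ * z₂))
        = fun z₁ : ℝ => (fun w : ℝ => f (w / x₁) *
            (ENNReal.ofReal x₂⁻¹ * ∫⁻ x, f ((x - x₁ + w) / x₂) * h x)) (x₁ * z₁) := by
      funext z₁
      rw [key h hh (x₁ * (1 - z₁))]
      simp only [mul_div_cancel_left₀ _ hx₁.ne']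
      have harg : ∀ x : ℝ, x - x₁ * (1 - z₁) = x - x₁ + x₁ * z₁ := fun x => by ring
      simp only [harg]
    have hLmeas : AEMeasurable (fun w : ℝ => ∫⁻ x, f ((x - x₁ + w) / x₂) * h x) volume := by
      have hF : AEMeasurable (fun p : ℝ × ℝ => f ((p.2 - x₁ + p.1) / x₂) * h p.2)
          ((volume : Measure ℝ).prod volume) :=
        hq12.mul ((hh.comp measurable_snd).aemeasurable)
      obtain ⟨G, hGm, hGe⟩ := hF
      refine (Measurable.lintegral_prod_right' (ν := (volume : Measure ℝ)) hGm).aemeasurable.congr ?_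
      filter_upwards [Measure.ae_ae_of_ae_prod hGe] with w hw
      exact (lintegral_congr_ae hw).symm
    have hJ : AEMeasurable (fun w : ℝ => f (w / x₁) *
        (ENNReal.ofReal x₂⁻¹ * ∫⁻ x, f ((x - x₁ + w) / x₂) * h x)) volume :=
      hfd1.mul (aemeasurable_const.mul hLmeas)
    have e4 : transferK B x₁ x₂ s = ENNReal.ofReal x₁⁻¹ *
        ∫⁻ w, f (w / x₁) * (ENNReal.ofReal x₂⁻¹ * ∫⁻ x, f ((x - x₁ + w) / x₂) * h x) := by
      rw [e1, e2, e3, lint_scale hx₁ hJ]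
    have e5 : (∫⁻ w, f (w / x₁) * (ENNReal.ofReal x₂⁻¹ * ∫⁻ x, f ((x - x₁ + w) / x₂) * h x))
        = ENNReal.ofReal x₂⁻¹ * ∫⁻ w, ∫⁻ x, f (w / x₁) * (f ((x - x₁ + w) / x₂) * h x) := by
      rw [← lintegral_const_mul' _ _ (ENNReal.ofReal_ne_top (r := x₂⁻¹))]
      refine lintegral_congr fun w => ?_
      rw [mul_left_comm, ← lintegral_const_mul' _ _ (hfne _)]
    have hFfull : AEMeasurable
        (Function.uncurry fun w x : ℝ => f (w / x₁) * (f ((x - x₁ + w) / x₂) * h x))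
        ((volume : Measure ℝ).prod volume) :=
      hwfst1.mul (hq12.mul ((hh.comp measurable_snd).aemeasurable))
    have e6 : (∫⁻ w, ∫⁻ x, f (w / x₁) * (f ((x - x₁ + w) / x₂) * h x))
        = ∫⁻ x, D x * h x := by
      rw [lintegral_lintegral_swap hFfull]
      refine lintegral_congr fun x => ?_
      rw [hDdef]
      rw [← lintegral_mul_const' _ _ (hhne x)]
      exact lintegral_congr fun w => by ring
    have e7 : (∫⁻ x, D x * h x) = ∫⁻ x in s, D x := by
      rw [← lintegral_indicator hs]
      refine lintegral_congr fun x => ?_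
      by_cases hx : x ∈ s <;> simp [Set.indicator, hx, hhdef]
    rw [e4, e5, e6, e7, withDensity_apply _ hs, ← mul_assoc, ← hc₀,
      ← lintegral_const_mul' _ _ hc₀ne]
  -- total mass 1, hence a.e. finiteness of the density
  have htot : (∫⁻ x, c₀ * D x) = 1 := by
    have h1 : transferK B x₁ x₂ Set.univ = 1 := by
      rw [transferK, Measure.map_apply hφ MeasurableSet.univ, Set.preimage_univ,
        ← Set.univ_prod_univ, Measure.prod_prod, measure_univ, one_mul]
    rw [main, withDensity_apply _ MeasurableSet.univ, Measure.restrict_univ] at h1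
    exact h1
  have hDlt : ∀ᵐ x : ℝ, D x ≠ ∞ := by
    have h1 : ∀ᵐ x : ℝ, c₀ * D x < ∞ :=
      ae_lt_top' (aemeasurable_const.mul hDmeas) (by rw [htot]; exact ENNReal.one_ne_top)
    filter_upwards [h1] with x hx
    intro hD
    rw [hD, ENNReal.mul_top hc₀0] at hx
    exact (lt_irrefl _ hx)
  -- a.e. measurability of sections of the real integrand
  have hBtae : AEMeasurable Bt volume := hBt_int.aemeasurable
  have hF4 : AEMeasurable (fun p : ℝ × ℝ => Bt ((p.1 - x₁ + p.2) / x₂) * Bt (p.2 / x₁))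
      ((volume : Measure ℝ).prod volume) := by
    have h1 : AEMeasurable (fun p : ℝ × ℝ => Bt ((p.1 + p.2 - x₁) / x₂))
        ((volume : Measure ℝ).prod volume) :=
      hBtae.comp_quasiMeasurePreserving (qmp_aux x₁ hx₂.ne')
    have h2 : AEMeasurable (fun p : ℝ × ℝ => Bt (p.2 / x₁))
        ((volume : Measure ℝ).prod volume) :=
      (hBtae.comp_quasiMeasurePreserving (qmp_div hx₁.ne')).comp_quasiMeasurePreserving
        Measure.quasiMeasurePreserving_snd
    have e : (fun p : ℝ × ℝ => Bt ((p.1 - x₁ + p.2) / x₂))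
        = fun p : ℝ × ℝ => Bt ((p.1 + p.2 - x₁) / x₂) := by
      funext p; congr 1; ring
    rw [show (fun p : ℝ × ℝ => Bt ((p.1 - x₁ + p.2) / x₂) * Bt (p.2 / x₁))
        = fun p : ℝ × ℝ => Bt ((p.1 + p.2 - x₁) / x₂) * Bt (p.2 / x₁) by
      funext p; congr 2; ring]
    exact h1.mul h2
  obtain ⟨G4, hG4m, hG4e⟩ := hF4
  have hsect : ∀ᵐ x : ℝ, AEMeasurable (fun w => Bt ((x - x₁ + w) / x₂) * Bt (w / x₁)) volume := by
    filter_upwards [Measure.ae_ae_of_ae_prod hG4e] with x hx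
    have hm : AEMeasurable (fun w => G4 (x, w)) volume :=
      (hG4m.comp measurable_prodMk_left).aemeasurable
    have hx' : (fun w => G4 (x, w)) =ᵐ[volume]
        fun w => Bt ((x - x₁ + w) / x₂) * Bt (w / x₁) := by
      filter_upwards [hx] with w hw
      exact hw.symm
    exact hm.congr hx'
  -- restriction of the inner integral to (0, ∞)
  have h0ae : ∀ᵐ w : ℝ, w ≠ 0 := by
    refine ae_iff.mpr ?_
    simp only [not_not, Set.setOf_eq_eq_singleton]
    exact Real.volume_singleton
  have hIoi : ∀ x : ℝ, D x = ∫⁻ w in Set.Ioi (0:ℝ), f ((x - x₁ + w) / x₂) * f (w / x₁) := by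
    intro x
    rw [hDdef, ← lintegral_indicator measurableSet_Ioi]
    refine lintegral_congr_ae ?_
    filter_upwards [h0ae] with w hw
    rcases hw.lt_or_gt with hneg | hpos
    · have hBt0 : Bt (w / x₁) = 0 := by
        refine hBt_supp _ fun hmem => ?_
        exact absurd hmem.1 (not_le.mpr (div_neg_of_neg_of_pos hneg hx₁))
      have hf0 : f (w / x₁) = 0 := by rw [hfdef]; simp [hBt0]
      rw [Set.indicator_of_notMem (by simpa using hneg.not_gt : w ∉ Set.Ioi (0:ℝ)), hf0,
        mul_zero]
    · exact (Set.indicator_of_mem (Set.mem_Ioi.mpr hpos) (fun w => f ((x - x₁ + w) / x₂) * f (w / x₁))).symm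
  -- conclude
  rw [main]
  refine withDensity_congr_ae ?_
  filter_upwards [hDlt, hsect] with x hxfin hxsec
  have hofg : ∀ w : ℝ, ENNReal.ofReal (Bt ((x - x₁ + w) / x₂) * Bt (w / x₁))
      = f ((x - x₁ + w) / x₂) * f (w / x₁) := fun w => ENNReal.ofReal_mul (hBt_nonneg _)
  have hlg : (∫⁻ w in Set.Ioi (0:ℝ),
      ENNReal.ofReal (Bt ((x - x₁ + w) / x₂) * Bt (w / x₁))) = D x := by
    rw [hIoi x]; exact lintegral_congr fun w => hofg w
  have hgnn : 0 ≤ᵐ[volume.restrict (Set.Ioi (0:ℝ))]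
      fun w => Bt ((x - x₁ + w) / x₂) * Bt (w / x₁) :=
    Eventually.of_forall fun w => mul_nonneg (hBt_nonneg _) (hBt_nonneg _)
  have hint : Integrable (fun w => Bt ((x - x₁ + w) / x₂) * Bt (w / x₁))
      (volume.restrict (Set.Ioi (0:ℝ))) := by
    refine ⟨(hxsec.restrict).aestronglyMeasurable, ?_⟩
    rw [hasFiniteIntegral_iff_ofReal hgnn, hlg]
    exact lt_top_iff_ne_top.mpr hxfin
  have hoi : ENNReal.ofReal (∫ w in Set.Ioi (0:ℝ), Bt ((x - x₁ + w) / x₂) * Bt (w / x₁))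
      = D x := by
    rw [MeasureTheory.ofReal_integral_eq_lintegral_ofReal hint hgnn, hlg]
  have hcc : ENNReal.ofReal (1 / (x₁ * x₂)) = c₀ := by
    rw [hc₀, one_div, mul_inv, ENNReal.ofReal_mul (inv_nonneg.mpr hx₁.le)]
  rw [ENNReal.ofReal_mul (by positivity), hoi, hcc]
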